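/- For the polynomial W = x_1^3 + x_1 x_2^2 + x_2 x_3^2 + ... + x_{n-1} x_n^2 in n variables, the quasihomogeneity degree is d = 3 (with suitable weights), while the exponent of the group of diagonal symmetries G_W is 2^{n-1}·3. -/

import Mathlib

/-- The subgroup of `(ℂˣ)^n` cut out by the monomial relations of an exponent matrix `m`. -/
def expSym (n : ℕ) (m : Fin n → Fin n → ℕ) : Subgroup (Fin n → ℂˣ) where
  carrier := {α | ∀ i, ∏ j, α j ^ m i j = 1}
  one_mem' := by intro i; simp
  mul_mem' := by
    intro α β hα hβ i
    simp only [Pi.mul_apply, mul_pow, Finset.prod_mul_distrib, hα i, hβ i, one_mul]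
  inv_mem' := by
    intro α hα i
    simp only [Pi.inv_apply, inv_pow, Finset.prod_inv_distrib, hα i, inv_one]

/-- For `W = x 0 ^ 3 + x 0 * x 1 ^ 2 + x 1 * x 2 ^ 2 + ... + x (n-2) * x (n-1) ^ 2`
(with exponent matrix `m`), the quasihomogeneity degree is `3` (for suitable positive
weights), while the exponent of the group of diagonal symmetries `G_W` is `2^(n-1) * 3`. -/
theorem stmt6 (n : ℕ) (hn : 1 ≤ n) (m : Fin n → Fin n → ℕ)
    (hm : ∀ i j : Fin n, m i j =
      if (i : ℕ) = 0 then (if (j : ℕ) = 0 then 3 else 0)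
      else (if (j : ℕ) = (i : ℕ) then 2 else if (j : ℕ) + 1 = (i : ℕ) then 1 else 0)) :
    (∃ c : Fin n → ℕ, (∀ j, 0 < c j) ∧ ∀ i, ∑ j, m i j * c j = 3) ∧
      Monoid.exponent (expSym n m) = 2 ^ (n - 1) * 3 := by
  have hn0 : 0 < n := hn
  -- row product lemmas
  have row0 : ∀ (β : Fin n → ℂˣ) (i : Fin n), (i : ℕ) = 0 →
      ∏ j, β j ^ m i j = β i ^ 3 := by
    intro β i hi
    rw [Fintype.prod_eq_single i]
    · rw [hm]; simp [hi]
    · intro x hx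
      rw [hm, if_pos hi, if_neg, pow_zero]
      intro hx0
      exact hx (Fin.ext (by omega))
  have rowS : ∀ (β : Fin n → ℂˣ) (i : Fin n) (hi : (i : ℕ) ≠ 0),
      ∏ j, β j ^ m i j = β ⟨(i : ℕ) - 1, by omega⟩ * β i ^ 2 := by
    intro β i hi
    have hpi : (⟨(i : ℕ) - 1, by omega⟩ : Fin n) ≠ i := by
      intro h
      have := Fin.val_eq_val (⟨(i : ℕ) - 1, by omega⟩ : Fin n) i
      simp [h] at this
      omega
    rw [Fintype.prod_eq_mul (⟨(i : ℕ) - 1, by omega⟩ : Fin n) i hpi]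
    · congr 1
      · rw [hm, if_neg hi, if_neg (by simp; omega), if_pos (by simp; omega), pow_one]
      · rw [hm, if_neg hi, if_pos rfl]
    · intro x ⟨hx1, hx2⟩
      rw [hm, if_neg hi, if_neg, if_neg, pow_zero]
      · intro h
        exact hx1 (Fin.ext (by simp; omega))
      · intro h
        exact hx2 (Fin.ext (by omega))
  constructor
  · -- quasihomogeneity with weights all 1
    refine ⟨fun _ => 1, fun _ => one_pos, fun i => ?_⟩
    simp only [mul_one]
    by_cases hi : (i : ℕ) = 0
    · rw [Fintype.sum_eq_single i]
      · rw [hm]; simp [hi]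
      · intro x hx
        rw [hm, if_pos hi, if_neg]
        intro hx0
        exact hx (Fin.ext (by omega))
    · have hpi : (⟨(i : ℕ) - 1, by omega⟩ : Fin n) ≠ i := by
        intro h
        have := Fin.val_eq_val (⟨(i : ℕ) - 1, by omega⟩ : Fin n) i
        simp [h] at this
        omega
      rw [Fintype.sum_eq_add (⟨(i : ℕ) - 1, by omega⟩ : Fin n) i hpi]
      · rw [hm, hm, if_neg hi, if_neg hi, if_neg (by simp; omega),
          if_pos (by simp; omega), if_pos rfl]
      · intro x ⟨hx1, hx2⟩
        rw [hm, if_neg hi, if_neg, if_neg]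
        · intro h
          exact hx1 (Fin.ext (by simp; omega))
        · intro h
          exact hx2 (Fin.ext (by omega))
  · -- exponent of the symmetry group
    set N : ℕ := 2 ^ (n - 1) * 3 with hNdef
    have hNpos : 0 < N := by positivity
    have hζc := Complex.isPrimitiveRoot_exp N hNpos.ne'
    set ζ : ℂˣ := (hζc.isUnit hNpos.ne').unit with hζdef
    have hζ : IsPrimitiveRoot ζ N := hζc.isUnit_unit hNpos.ne'
    have hζN : ζ ^ N = 1 := hζ.pow_eq_one
    -- every element has order dividing N
    have key : ∀ α, α ∈ expSym n m → ∀ k (hk : k < n),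
        α ⟨k, hk⟩ ^ (3 * 2 ^ k) = 1 := by
      intro α hα k
      induction k with
      | zero =>
        intro hk
        have h0 := hα ⟨0, hk⟩
        rw [row0 α ⟨0, hk⟩ rfl] at h0
        simpa using h0
      | succ s ih =>
        intro hk
        have hs := ih (by omega)
        have hrel := hα ⟨s + 1, hk⟩
        rw [rowS α ⟨s + 1, hk⟩ (by simp)] at hrel
        have h2 : α ⟨s + 1, hk⟩ ^ 2 = (α ⟨s, by omega⟩)⁻¹ := by
          have : α ⟨s, by omega⟩ * α ⟨s + 1, hk⟩ ^ 2 = 1 := hrel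
          exact eq_inv_of_mul_eq_one_left (by rw [mul_comm]; exact this)
        calc α ⟨s + 1, hk⟩ ^ (3 * 2 ^ (s + 1))
            = (α ⟨s + 1, hk⟩ ^ 2) ^ (3 * 2 ^ s) := by
              rw [← pow_mul]; ring_nf
          _ = ((α ⟨s, by omega⟩) ^ (3 * 2 ^ s))⁻¹ := by rw [h2, inv_pow]
          _ = 1 := by rw [hs, inv_one]
    have hdvd : Monoid.exponent (expSym n m) ∣ N := by
      apply Monoid.exponent_dvd_of_forall_pow_eq_one
      intro g
      refine Subtype.ext ?_
      rw [SubmonoidClass.coe_pow, OneMemClass.coe_one]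
      funext i
      show (g : Fin n → ℂˣ) i ^ N = 1
      have hk := key g g.2 i.val i.isLt
      have hsplit : N = 3 * 2 ^ (i : ℕ) * 2 ^ (n - 1 - (i : ℕ)) := by
        rw [hNdef, mul_assoc, ← pow_add]
        have : (i : ℕ) ≤ n - 1 := by omega
        rw [Nat.add_sub_cancel' this, mul_comm]
      rw [hsplit, pow_mul,
        show (g : Fin n → ℂˣ) i ^ (3 * 2 ^ (i : ℕ)) = 1 from by simpa using hk, one_pow]
    -- an element of order exactly N
    set e : Fin n → ℤ := fun i => (-2 : ℤ) ^ (n - 1 - (i : ℕ)) with hedef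
    set α : Fin n → ℂˣ := fun i => ζ ^ e i with hαdef
    have hζNz : ζ ^ ((N : ℤ)) = 1 := by rw [zpow_natCast, hζN]
    have hmem : α ∈ expSym n m := by
      intro i
      by_cases hi : (i : ℕ) = 0
      · rw [row0 α i hi]
        have : α i ^ 3 = ζ ^ ((N : ℤ) * (-1 : ℤ) ^ (n - 1)) := by
          rw [hαdef]
          simp only
          rw [← zpow_natCast (ζ ^ e i) 3, ← zpow_mul]
          congr 1
          rw [hedef]
          simp only [hi, Nat.sub_zero]
          push_cast [hNdef]
          rw [neg_pow]
          ring
        rw [this, zpow_mul, hζNz, one_zpow]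
      · rw [rowS α i hi]
        have h2 : α i ^ 2 = ζ ^ (e i * 2) := by
          rw [hαdef]
          simp only
          rw [← zpow_natCast (ζ ^ e i) 2, ← zpow_mul]
          norm_num
        have hexp : e ⟨(i : ℕ) - 1, by omega⟩ + e i * 2 = 0 := by
          rw [hedef]
          simp only
          have h1 : n - 1 - ((i : ℕ) - 1) = (n - 1 - (i : ℕ)) + 1 := by omega
          rw [h1, pow_succ]
          ring
        rw [h2, hαdef]
        simp only
        rw [← zpow_add, hexp, zpow_zero]
    set g : (expSym n m) := ⟨α, hmem⟩ with hgdef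
    have hord : ζ ^ orderOf g = 1 := by
      have h1 := pow_orderOf_eq_one g
      have h2 : (g : Fin n → ℂˣ) ^ orderOf g = 1 := by
        rw [← SubmonoidClass.coe_pow, h1, OneMemClass.coe_one]
      have h3 := congrFun h2 ⟨n - 1, by omega⟩
      have h4 : α ⟨n - 1, by omega⟩ = ζ := by
        rw [hαdef]
        simp only [hedef, Nat.sub_self, pow_zero, zpow_one]
      simp only [Pi.pow_apply, Pi.one_apply] at h3
      rw [show (g : Fin n → ℂˣ) ⟨n - 1, by omega⟩ = ζ from h4] at h3
      exact h3
    have hNo : N ∣ orderOf g := (hζ.pow_eq_one_iff_dvd _).mp hord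
    exact Nat.dvd_antisymm hdvd (hNo.trans (Monoid.order_dvd_exponent g))
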